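/- Assume that the morphism is strong, i.e., the canonical map R ⊗_{R^G} S^G → S, r ⊗ s ↦ r·s, is bijective, and that S is finitely generated as an R-module. Then S^G is finitely generated as an R^G-module. -/

import Mathlib

open TensorProduct

/-- The subring of `G`-invariant elements of `R`. -/
def fixedSubring (G R : Type*) [Group G] [CommRing R] [MulSemiringAction G R] : Subring R where
  carrier := {r | ∀ g : G, g • r = r}
  mul_mem' := by intro a b ha hb g; rw [smul_mul', ha, hb]
  one_mem' := fun g => smul_one g
  add_mem' := by intro a b ha hb g; rw [smul_add, ha, hb]
  zero_mem' := fun g => smul_zero g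
  neg_mem' := by intro a ha g; rw [smul_neg, ha]

/-- An `R`-algebra `S` with `G`-actions on both `R` and `S` making the structure map
equivariant. -/
class EquivariantAlgebra (G R S : Type*) [Group G] [CommRing R] [CommRing S] [Algebra R S]
    [MulSemiringAction G R] [MulSemiringAction G S] : Prop where
  smul_algebraMap : ∀ (g : G) (r : R), g • (algebraMap R S r) = algebraMap R S (g • r)

variable (G R S : Type*) [Group G] [CommRing R] [CommRing S] [Algebra R S]
  [MulSemiringAction G R] [MulSemiringAction G S] [EquivariantAlgebra G R S]

/-- The restriction `R^G → S^G` of the structure map `R → S`. -/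
def invariantsMap : fixedSubring G R →+* fixedSubring G S where
  toFun a := ⟨algebraMap R S a,
    fun g => by rw [EquivariantAlgebra.smul_algebraMap g (a : R),
      show g • (a : R) = (a : R) from a.2 g]⟩
  map_one' := by ext; simp
  map_mul' := fun a b => by ext; simp
  map_zero' := by ext; simp
  map_add' := fun a b => by ext; simp

/-- `S^G` is an `R^G`-algebra via the restricted structure map. -/
noncomputable instance : Algebra (fixedSubring G R) (fixedSubring G S) :=
  (invariantsMap G R S).toAlgebra

/-- `S` is an `R^G`-algebra via `R^G → R → S`. -/
noncomputable instance instAlgebraFixedBase {G R S : Type*} [Group G] [CommRing R]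
    [CommRing S] [Algebra R S] [MulSemiringAction G R] [MulSemiringAction G S]
    [EquivariantAlgebra G R S] : Algebra (fixedSubring G R) S :=
  ((algebraMap R S).comp (fixedSubring G R).subtype).toAlgebra

/-- The canonical map `R ⊗_{R^G} S^G → S`, `r ⊗ s ↦ r·s`. The morphism
`Spec S → Spec R` is *strong* when this map is bijective. -/
noncomputable def strongMap :
    R ⊗[fixedSubring G R] (fixedSubring G S) →ₐ[fixedSubring G R] S :=
  Algebra.TensorProduct.productMap
    (R := fixedSubring G R) (A := R) (B := fixedSubring G S) (S := S)
    { algebraMap R S with commutes' := fun a => rfl }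
    { (fixedSubring G S).subtype with commutes' := fun a => rfl }

/-- If `Spec S → Spec R` is strong and `S` is a finite `R`-module, then `S^G` is a
finite `R^G`-module. -/
theorem invariants_finite_of_strong_of_finite
    {G : Type*} {R S : Type u} [Group G] [Fintype G] [CommRing R] [CommRing S] [Algebra R S]
    [MulSemiringAction G R] [MulSemiringAction G S] [EquivariantAlgebra G R S]
    (hcard : Invertible (Fintype.card G : R))
    (hstrong : Function.Bijective (strongMap G R S))
    (hfin : Module.Finite R S) :
    Module.Finite (fixedSubring G R) (fixedSubring G S) := by
  classical
  set c : R := (Fintype.card G : R) with hc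
  have hcfix : ∀ g : G, g • c = c := fun g => map_natCast (MulSemiringAction.toRingHom G R g) _
  set u : R := ⅟c with huu
  have hu : ∀ g : G, g • u = u := by
    intro g
    refine (invOf_eq_right_inv ?_).symm
    calc c * g • u = g • c * g • u := by rw [hcfix]
      _ = g • (c * u) := (smul_mul' g c u).symm
      _ = 1 := by rw [mul_invOf_self, smul_one]
  have hsumS : ∀ (g : G) (s : S), g • ∑ h : G, h • s = ∑ h : G, h • s := by
    intro g s
    rw [Finset.smul_sum]
    simp_rw [smul_smul]
    exact Fintype.sum_equiv (Equiv.mulLeft g) _ _ (fun h => rfl)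
  have hsumR : ∀ (g : G) (r : R), g • ∑ h : G, h • r = ∑ h : G, h • r := by
    intro g r
    rw [Finset.smul_sum]
    simp_rw [smul_smul]
    exact Fintype.sum_equiv (Equiv.mulLeft g) _ _ (fun h => rfl)
  have hmemS : ∀ s : S, (algebraMap R S u * ∑ h : G, h • s) ∈ fixedSubring G S := by
    intro s g
    rw [smul_mul', EquivariantAlgebra.smul_algebraMap, hu, hsumS]
  have hreynmem : ∀ r : R, (u * ∑ h : G, h • r) ∈ fixedSubring G R := by
    intro r g
    rw [smul_mul', hu, hsumR]
  set reyn : R → fixedSubring G R := fun r => ⟨u * ∑ h : G, h • r, hreynmem r⟩ with hreyn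
  -- the Reynolds operator `φ : S → S^G`
  set φ : S →ₗ[fixedSubring G R] fixedSubring G S :=
  { toFun := fun s => ⟨algebraMap R S u * ∑ h : G, h • s, hmemS s⟩
    map_add' := by
      intro s₁ s₂
      apply Subtype.ext
      show algebraMap R S u * ∑ h : G, h • (s₁ + s₂) = _
      simp [smul_add, Finset.sum_add_distrib, mul_add]
    map_smul' := by
      intro a s
      apply Subtype.ext
      have h1 : a • s = algebraMap R S (a : R) * s := by
        rw [Algebra.smul_def]; rfl
      show algebraMap R S u * ∑ h : G, h • (a • s)
          = algebraMap R S (a : R) * (algebraMap R S u * ∑ h : G, h • s)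
      rw [h1]
      have ha : ∀ h : G, h • (a : R) = (a : R) := a.2
      calc algebraMap R S u * ∑ h : G, h • (algebraMap R S (a : R) * s)
          = algebraMap R S u * ∑ h : G, algebraMap R S (a : R) * h • s := by
            simp_rw [smul_mul', EquivariantAlgebra.smul_algebraMap, ha]
        _ = algebraMap R S (a : R) * (algebraMap R S u * ∑ h : G, h • s) := by
            rw [← Finset.mul_sum]; ring } with hφ
  have hφ_fix : ∀ t : fixedSubring G S, φ (t : S) = t := by
    intro t
    apply Subtype.ext
    show algebraMap R S u * ∑ h : G, h • (t : S) = (t : S)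
    rw [Finset.sum_congr rfl fun h _ => t.2 h, Finset.sum_const, Finset.card_univ,
      nsmul_eq_mul, ← map_natCast (algebraMap R S) (Fintype.card G), ← mul_assoc,
      ← map_mul, ← hc, invOf_mul_self, map_one, one_mul]
  have hφ_mul : ∀ (r : R) (t : fixedSubring G S),
      φ (algebraMap R S r * (t : S)) = reyn r • t := by
    intro r t
    apply Subtype.ext
    show algebraMap R S u * ∑ h : G, h • (algebraMap R S r * (t : S))
        = algebraMap R S (u * ∑ h : G, h • r) * (t : S)
    simp_rw [smul_mul', EquivariantAlgebra.smul_algebraMap, t.2 _]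
    rw [← Finset.sum_mul, ← map_sum, map_mul, mul_assoc]
  obtain ⟨n, f, hf⟩ := Module.Finite.exists_fin (R := R) (M := S)
  choose x hx using fun i => (hstrong.2 (f i))
  choose D hD using fun i => TensorProduct.exists_finset (x i)
  refine ⟨⟨Finset.univ.biUnion (fun i => (D i).image Prod.snd), ?_⟩⟩
  rw [eq_top_iff]
  rintro ⟨t, ht⟩ -
  have htop : t ∈ Submodule.span R (Set.range f) := hf ▸ Submodule.mem_top
  obtain ⟨a, ha⟩ := (Submodule.mem_span_range_iff_exists_fun R).1 htop
  have hfi : ∀ i, f i = ∑ p ∈ D i, algebraMap R S p.1 * (p.2 : S) := by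
    intro i
    rw [← hx i, hD i, map_sum]
    refine Finset.sum_congr rfl fun p _ => ?_
    rw [strongMap, Algebra.TensorProduct.productMap_apply_tmul]
    rfl
  have ht2 : t = ∑ i, ∑ p ∈ D i, algebraMap R S (a i * p.1) * (p.2 : S) := by
    rw [← ha]
    refine Finset.sum_congr rfl fun i _ => ?_
    rw [hfi i, Algebra.smul_def, Finset.mul_sum]
    refine Finset.sum_congr rfl fun p _ => ?_
    rw [map_mul, mul_assoc]
  have key : (⟨t, ht⟩ : fixedSubring G S) = ∑ i, ∑ p ∈ D i, reyn (a i * p.1) • p.2 := by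
    rw [← hφ_fix ⟨t, ht⟩]
    show φ t = _
    rw [ht2, map_sum]
    refine Finset.sum_congr rfl fun i _ => ?_
    rw [map_sum]
    exact Finset.sum_congr rfl fun p _ => hφ_mul (a i * p.1) p.2
  rw [key]
  refine Submodule.sum_mem _ fun i _ => Submodule.sum_mem _ fun p hp =>
    Submodule.smul_mem _ _ (Submodule.subset_span ?_)
  exact Finset.mem_coe.2 (Finset.mem_biUnion.2
    ⟨i, Finset.mem_univ i, Finset.mem_image.2 ⟨p, hp, rfl⟩⟩)
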